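/- There are exactly three extensions of the powerset functor P to the category Rel: (1) the Barr (Egli–Milner) extension, A (F̂r) B iff B ⊆ r[A] and A ⊆ r°[B]; (2) the relational image extension, A (F̂r) B iff B = r[A]; and (3) the restricted relational image extension, A (F̂r) B iff (B = r[A] ≠ ∅) or A = B = ∅. -/

import Mathlib

open CategoryTheory

/-- The graph of a function, as a relation. -/
def graphRel {X Y : Type} (f : X → Y) : Rel X Y := fun x y => f x = y

/-- An extension of a `Set`-endofunctor `F` to the category of sets and relations:
an assignment on relations that preserves relational composition and agrees with `F`
on (graphs of) functions. -/
structure RelExtension (F : Type ⥤ Type) where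
  ext : ∀ {X Y : Type}, Rel X Y → Rel (F.obj X) (F.obj Y)
  ext_comp : ∀ {X Y Z : Type} (r : Rel X Y) (s : Rel Y Z),
    ext (fun x z => ∃ y, r x y ∧ s y z) = fun a c => ∃ b, ext r a b ∧ ext s b c
  ext_fun : ∀ {X Y : Type} (f : X → Y), ext (graphRel f) = graphRel (F.map (TypeCat.ofHom f))


/-- The covariant powerset functor on `Set`. -/
def PowFunctor : Type ⥤ Type where
  obj X := Set X
  map f := TypeCat.ofHom (Set.image f)
  map_id := by intro X; ext A; simp
  map_comp := by intro X Y Z f g; ext A; simp [Set.image_image]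

/-- The Barr (Egli–Milner) extension of the powerset functor. -/
def barrP {X Y : Type} (r : Rel X Y) : Rel (Set X) (Set Y) :=
  fun A B => B ⊆ {y | ∃ x ∈ A, r x y} ∧ A ⊆ {x | ∃ y ∈ B, r x y}

/-- The relational image extension of the powerset functor. -/
def imgP {X Y : Type} (r : Rel X Y) : Rel (Set X) (Set Y) :=
  fun A B => B = {y | ∃ x ∈ A, r x y}

/-- The restricted relational image extension of the powerset functor. -/
def rimgP {X Y : Type} (r : Rel X Y) : Rel (Set X) (Set Y) :=
  fun A B => (B = {y | ∃ x ∈ A, r x y} ∧ B ≠ ∅) ∨ (A = ∅ ∧ B = ∅)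

def Rel.image {X Y : Type} (r : Rel X Y) (A : Set X) : Set Y := {y | ∃ x ∈ A, r x y}

def Rel.preimage {X Y : Type} (r : Rel X Y) (B : Set Y) : Set X := {x | ∃ y ∈ B, r x y}

def Rel.comp {X Y Z : Type} (r : Rel X Y) (s : Rel Y Z) : Rel X Z := fun x z => ∃ y, r x y ∧ s y z

namespace Stmt19

lemma image_comp_rel {X Y Z : Type} (r : Rel X Y) (s : Rel Y Z) (A : Set X) :
    (r.comp s).image A = s.image (r.image A) := by
  ext z
  constructor
  · rintro ⟨x, hx, y, hr, hs⟩
    exact ⟨y, ⟨x, hx, hr⟩, hs⟩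
  · rintro ⟨y, ⟨x, hx, hr⟩, hs⟩
    exact ⟨x, hx, y, hr, hs⟩

lemma image_graph {X Y : Type} (f : X → Y) (A : Set X) :
    (graphRel f).image A = f '' A := by
  ext y; constructor
  · rintro ⟨x, hx, h⟩; exact ⟨x, hx, h⟩
  · rintro ⟨x, hx, h⟩; exact ⟨x, hx, h⟩

lemma image_nonempty {X Y : Type} (r : Rel X Y) (A : Set X) (h : r.image A ≠ ∅) :
    A ≠ ∅ := by
  intro hA
  apply h
  ext y; simp only [Set.mem_empty_iff_false, iff_false]
  rintro ⟨x, hx, _⟩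
  rw [hA] at hx; exact hx

lemma image_empty_eq {X Y : Type} (r : Rel X Y) : r.image (∅ : Set X) = ∅ := by
  ext y; simp only [Set.mem_empty_iff_false, iff_false]
  rintro ⟨x, hx, _⟩; exact hx

def barrExt : RelExtension PowFunctor where
  ext := barrP
  ext_comp := by
    intro X Y Z r s
    funext A B
    apply propext
    constructor
    · rintro ⟨hB, hA⟩
      refine ⟨((r.image A ∩ s.preimage B : Set Y) : Set Y), ⟨?_, ?_⟩, ?_, ?_⟩
      · exact fun y hy => hy.1
      · intro x hx
        obtain ⟨z, hz, y, hr, hs⟩ := hA hx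
        exact ⟨y, ⟨⟨x, hx, hr⟩, ⟨z, hz, hs⟩⟩, hr⟩
      · intro z hz
        obtain ⟨x, hx, y, hr, hs⟩ := hB hz
        exact ⟨y, ⟨⟨x, hx, hr⟩, ⟨z, hz, hs⟩⟩, hs⟩
      · exact fun y hy => hy.2
    · rintro ⟨C, ⟨hCr, hAr⟩, ⟨hBs, hCs⟩⟩
      constructor
      · intro z hz
        obtain ⟨y, hy, hs⟩ := hBs hz
        obtain ⟨x, hx, hr⟩ := hCr hy
        exact ⟨x, hx, y, hr, hs⟩
      · intro x hx
        obtain ⟨y, hy, hr⟩ := hAr hx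
        obtain ⟨z, hz, hs⟩ := hCs hy
        exact ⟨z, hz, y, hr, hs⟩
  ext_fun := by
    intro X Y f
    funext A B
    apply propext
    show (B ⊆ (graphRel f).image A ∧ A ⊆ (graphRel f).preimage B) ↔ f '' A = B
    rw [image_graph]
    constructor
    · rintro ⟨h1, h2⟩
      apply Set.Subset.antisymm
      · rintro y ⟨x, hx, rfl⟩
        obtain ⟨y', hy', (h : f x = y')⟩ := h2 hx
        rwa [h]
      · exact h1
    · rintro rfl
      exact ⟨le_refl _, fun x hx => ⟨f x, ⟨x, hx, rfl⟩, rfl⟩⟩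

def imgExt : RelExtension PowFunctor where
  ext := imgP
  ext_comp := by
    intro X Y Z r s
    funext A B
    apply propext
    constructor
    · rintro rfl
      exact ⟨r.image A, rfl, image_comp_rel r s A⟩
    · rintro ⟨C, rfl, rfl⟩
      exact (image_comp_rel r s A).symm
  ext_fun := by
    intro X Y f
    funext A B
    apply propext
    show B = (graphRel f).image A ↔ f '' A = B
    rw [image_graph]; exact eq_comm
def rimgExt : RelExtension PowFunctor where
  ext := rimgP
  ext_comp := by
    intro X Y Z r s
    funext A B
    apply propext
    constructor
    · rintro (⟨rfl, hne⟩ | ⟨rfl, rfl⟩)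
      · refine ⟨r.image A, Or.inl ⟨rfl, fun h => hne ?_⟩, Or.inl ⟨image_comp_rel r s A, hne⟩⟩
        refine (image_comp_rel r s A).trans ?_
        rw [h, image_empty_eq]
      · exact ⟨(∅ : Set Y), Or.inr ⟨rfl, rfl⟩, Or.inr ⟨rfl, rfl⟩⟩
    · rintro ⟨C, hC, hB⟩
      rcases hB with ⟨rfl, hBne⟩ | ⟨rfl, rfl⟩
      · rcases hC with ⟨rfl, hCne⟩ | ⟨rfl, rfl⟩
        · exact Or.inl ⟨(image_comp_rel r s A).symm, hBne⟩
        · exact absurd (image_empty_eq s) hBne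
      · rcases hC with ⟨h0, hCne⟩ | ⟨rfl, _⟩
        · exact absurd rfl hCne
        · exact Or.inr ⟨rfl, rfl⟩
  ext_fun := by
    intro X Y f
    funext A B
    apply propext
    show ((B = (graphRel f).image A ∧ B ≠ ∅) ∨ (A = ∅ ∧ B = ∅)) ↔ f '' A = B
    rw [image_graph]
    constructor
    · rintro (⟨rfl, _⟩ | ⟨rfl, rfl⟩)
      · rfl
      · simp
    · rintro rfl
      rcases eq_or_ne A ∅ with rfl | hA
      · exact Or.inr ⟨rfl, by simp⟩
      · refine Or.inl ⟨rfl, ?_⟩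
        obtain ⟨x, hx⟩ := Set.nonempty_iff_ne_empty.2 hA
        intro h
        have : f x ∈ f '' A := ⟨x, hx, rfl⟩
        rw [h] at this; exact this

-- distinctness
def fullR : Rel Bool Bool := fun _ _ => True
def emptyR : Rel Bool Bool := fun _ _ => False

lemma fullR_image : fullR.image {true} = Set.univ := by
  ext y; simp [Rel.image, fullR]

lemma barr_full : barrP fullR {true} {true} := by
  constructor
  · intro y _; exact ⟨true, rfl, trivial⟩
  · intro x _; exact ⟨true, rfl, trivial⟩

lemma not_img_full : ¬ imgP fullR {true} {true} := by
  intro h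
  have : false ∈ ({true} : Set Bool) := by
    rw [h]; exact ⟨true, rfl, trivial⟩
  simp at this

lemma not_rimg_full : ¬ rimgP fullR {true} {true} := by
  rintro (⟨h, _⟩ | ⟨h, _⟩)
  · exact not_img_full h
  · have : true ∈ (∅ : Set Bool) := h ▸ rfl
    exact this

lemma emptyR_image (A : Set Bool) : emptyR.image A = ∅ := by
  ext y; simp [Rel.image, emptyR]

lemma img_empty : imgP emptyR Set.univ ∅ := by
  exact (emptyR_image Set.univ).symm

lemma not_rimg_empty : ¬ rimgP emptyR Set.univ ∅ := by
  rintro (⟨_, h⟩ | ⟨h, _⟩)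
  · exact h rfl
  · have : true ∈ (∅ : Set Bool) := h ▸ trivial
    exact this


section Machinery

def memRel (Y : Type) : Rel (Set Y) Y := fun S y => y ∈ S

def Lam {X Y : Type} (r : Rel X Y) : X → Set Y := fun x => {y | r x y}

variable (E : RelExtension PowFunctor)

lemma ext_comp' {X Y Z : Type} (r : Rel X Y) (s : Rel Y Z) :
    E.ext (r.comp s) = (E.ext r).comp (E.ext s) := E.ext_comp r s

lemma ext_fun' {X Y : Type} (f : X → Y) : E.ext (graphRel f) = graphRel (Set.image f) :=
  E.ext_fun f

/-- The "distributive law" relation underlying `E`. -/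
def DD (Y : Type) : Rel (Set (Set Y)) (Set Y) := E.ext (memRel Y)

lemma decomp {X Y : Type} (r : Rel X Y) :
    r = (graphRel (Lam r)).comp (memRel Y) := by
  funext x y
  apply propext
  constructor
  · intro h; exact ⟨Lam r x, rfl, h⟩
  · rintro ⟨S, rfl, h⟩; exact h

lemma map_eq {X Y : Type} (f : X → Y) : Set.image f = Set.image f := rfl

lemma ext_eq {X Y : Type} (r : Rel X Y) (A : Set X) (B : Set Y) :
    E.ext r A B ↔ DD E Y (Lam r '' A) B := by
  conv_lhs => rw [decomp r]
  rw [(ext_comp' E), (ext_fun' E)]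
  constructor
  · rintro ⟨S, (h1 : Set.image (Lam r) A = S), h2⟩
    rwa [h1]
  · intro h
    exact ⟨Lam r '' A, rfl, h⟩

/-- Naturality of `DD` as an iff. -/
lemma natD {Y Z : Type} (f : Y → Z) (𝒜 : Set (Set Y)) (C : Set Z) :
    (∃ B, DD E Y 𝒜 B ∧ f '' B = C) ↔ DD E Z (Set.image f '' 𝒜) C := by
  have nat : (memRel Y).comp (graphRel f) = (graphRel (Set.image f)).comp (memRel Z) := by
    funext S z
    apply propext
    constructor
    · rintro ⟨y, hy, rfl⟩; exact ⟨f '' S, rfl, ⟨y, hy, rfl⟩⟩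
    · rintro ⟨T, rfl, y, hy, rfl⟩; exact ⟨y, hy, rfl⟩
  have e : (E.ext (memRel Y)).comp (graphRel (Set.image f))
      = (graphRel (Set.image (Set.image f))).comp (E.ext (memRel Z)) := by
    exact (congrArg (Rel.comp (E.ext (memRel Y))) (ext_fun' E f).symm).trans
      ((ext_comp' E _ _).symm.trans ((congrArg E.ext nat).trans ((ext_comp' E _ _).trans
        (congrArg (fun R => Rel.comp R (E.ext (memRel Z))) (ext_fun' E (Set.image f))))))
  have e' := congrFun (congrFun e 𝒜) C
  constructor
  · rintro ⟨B, hB, hf⟩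
    have h1 : (E.ext (memRel Y)).comp (graphRel (Set.image f)) 𝒜 C :=
      ⟨B, hB, hf⟩
    have h2 := e' ▸ h1
    obtain ⟨𝒜', h𝒜', hD⟩ := h2
    have h3 : Set.image f '' 𝒜 = 𝒜' := h𝒜'
    rw [h3]
    exact hD
  · intro h
    have h1 : (graphRel (Set.image (Set.image f))).comp (E.ext (memRel Z)) 𝒜 C :=
      ⟨Set.image f '' 𝒜, rfl, h⟩
    have h2 := e'.symm ▸ h1
    obtain ⟨B, hB, hf⟩ := h2
    exact ⟨B, hB, hf⟩

/-- Naturality, forward direction. -/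
lemma T1 {Y Z : Type} (f : Y → Z) {𝒜 : Set (Set Y)} {B : Set Y}
    (h : DD E Y 𝒜 B) : DD E Z (Set.image f '' 𝒜) (f '' B) :=
  (natD E f 𝒜 (f '' B)).1 ⟨B, h, rfl⟩

/-- Naturality, backward direction. -/
lemma T2 {Y Z : Type} (f : Y → Z) {𝒜 : Set (Set Y)} {C : Set Z}
    (h : DD E Z (Set.image f '' 𝒜) C) : ∃ B, DD E Y 𝒜 B ∧ f '' B = C :=
  (natD E f 𝒜 C).2 h

/-- The unit law. -/
lemma etaD {Y : Type} (A B : Set Y) :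
    DD E Y ((fun y => ({y} : Set Y)) '' A) B ↔ B = A := by
  have un : (graphRel (fun y : Y => ({y} : Set Y))).comp (memRel Y) = graphRel (@id Y) := by
    funext x y
    apply propext
    constructor
    · rintro ⟨S, rfl, h⟩; exact h.symm
    · rintro rfl; exact ⟨{x}, rfl, rfl⟩
  have e : (graphRel (Set.image (fun y : Y => ({y} : Set Y)))).comp (E.ext (memRel Y))
      = graphRel (Set.image (@id Y)) := by
    exact (congrArg (fun R => Rel.comp R (E.ext (memRel Y)))
      (ext_fun' E (fun y : Y => ({y} : Set Y))).symm).trans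
        ((ext_comp' E _ _).symm.trans ((congrArg E.ext un).trans (ext_fun' E id)))
  have e' := congrFun (congrFun e A) B
  constructor
  · intro h
    have h1 : (graphRel (Set.image (fun y : Y => ({y} : Set Y)))).comp (E.ext (memRel Y)) A B :=
      ⟨(fun y => ({y} : Set Y)) '' A, rfl, h⟩
    have h2 := e' ▸ h1
    have h3 : Set.image id A = B := h2
    rw [Set.image_id] at h3
    exact h3.symm
  · rintro rfl
    have h1 : graphRel (Set.image (@id Y)) B B := by
      show Set.image id B = B
      rw [Set.image_id]
    have h2 := e'.symm ▸ h1
    obtain ⟨S, hS, hD⟩ := h2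
    have h3 : (fun y => ({y} : Set Y)) '' B = S := hS
    rw [h3]
    exact hD

/-- The multiplication law. -/
lemma multD {Y : Type} (𝔄 : Set (Set (Set Y))) (B : Set Y) :
    (∃ 𝒞, DD E (Set Y) 𝔄 𝒞 ∧ DD E Y 𝒞 B) ↔ DD E Y (Set.sUnion '' 𝔄) B := by
  have mm : (memRel (Set Y)).comp (memRel Y) = (graphRel (Set.sUnion)).comp (memRel Y) := by
    funext 𝒮 y
    apply propext
    constructor
    · rintro ⟨S, hS, hy⟩; exact ⟨⋃₀ 𝒮, rfl, ⟨S, hS, hy⟩⟩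
    · rintro ⟨T, rfl, ⟨S, hS, hy⟩⟩; exact ⟨S, hS, hy⟩
  have e : (E.ext (memRel (Set Y))).comp (E.ext (memRel Y))
      = (graphRel (Set.image Set.sUnion)).comp (E.ext (memRel Y)) := by
    exact (ext_comp' E _ _).symm.trans ((congrArg E.ext mm).trans ((ext_comp' E _ _).trans
      (congrArg (fun R => Rel.comp R (E.ext (memRel Y))) (ext_fun' E Set.sUnion))))
  have e' := congrFun (congrFun e 𝔄) B
  constructor
  · rintro ⟨𝒞, h1, h2⟩
    have h3 : (E.ext (memRel (Set Y))).comp (E.ext (memRel Y)) 𝔄 B := ⟨𝒞, h1, h2⟩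
    have h4 := e' ▸ h3
    obtain ⟨X, hX, hD⟩ := h4
    have h5 : Set.image Set.sUnion 𝔄 = X := hX
    rw [h5]
    exact hD
  · intro h
    have h1 : (graphRel (Set.image Set.sUnion)).comp (E.ext (memRel Y)) 𝔄 B :=
      ⟨Set.sUnion '' 𝔄, rfl, h⟩
    have h2 := e'.symm ▸ h1
    obtain ⟨𝒞, hC, hD⟩ := h2
    exact ⟨𝒞, hC, hD⟩


/-- `DD` applied to the empty family: relates exactly to `∅`. -/
lemma P1 {Y : Type} (B : Set Y) : DD E Y ∅ B ↔ B = ∅ := by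
  have := etaD E (∅ : Set Y) B
  rwa [Set.image_empty] at this

/-- Any relatum is contained in the union. -/
lemma P2 {Y : Type} {𝒜 : Set (Set Y)} {B : Set Y} (h : DD E Y 𝒜 B) : B ⊆ ⋃₀ 𝒜 := by
  set U := ⋃₀ 𝒜 with hU
  set v : U → Y := Subtype.val with hv
  have key : Set.image v '' ((fun S => v ⁻¹' S) '' 𝒜) = 𝒜 := by
    rw [Set.image_image]
    have : ∀ S ∈ 𝒜, v '' (v ⁻¹' S) = S := by
      intro S hS
      rw [hv, Subtype.image_preimage_coe]
      exact Set.inter_eq_right.2 fun y hy => ⟨S, hS, hy⟩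
    ext S
    constructor
    · rintro ⟨T, hT, rfl⟩
      show v '' (v ⁻¹' T) ∈ 𝒜
      rw [this T hT]; exact hT
    · intro hS
      exact ⟨S, hS, (this S hS : _)⟩
  rw [← key] at h
  obtain ⟨B₀, _, rfl⟩ := T2 E v h
  intro y hy
  obtain ⟨x, _, rfl⟩ := hy
  exact x.2

/-- A family of nonempty sets relates to something nonempty. -/
lemma P3 {Y : Type} {𝒜 : Set (Set Y)} (hne : 𝒜.Nonempty) (hmem : ∀ S ∈ 𝒜, S.Nonempty) :
    ∃ B, DD E Y 𝒜 B ∧ B.Nonempty := by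
  set f : Y → Unit := fun _ => ()
  have himg : Set.image f '' 𝒜 = (fun u => ({u} : Set Unit)) '' (Set.univ : Set Unit) := by
    have huniv : ∀ S ∈ 𝒜, f '' S = Set.univ := by
      intro S hS
      obtain ⟨y, hy⟩ := hmem S hS
      ext u
      simp only [Set.mem_univ, iff_true]
      exact ⟨y, hy, rfl⟩
    have h2 : (fun u => ({u} : Set Unit)) '' (Set.univ : Set Unit) = {Set.univ} := by
      ext S
      constructor
      · rintro ⟨u, _, rfl⟩
        have : ({u} : Set Unit) = Set.univ := by ext x; simp
        simp [this]
      · intro hS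
        refine ⟨(), trivial, ?_⟩
        simp only [Set.mem_singleton_iff] at hS
        rw [hS]; ext x; simp
    rw [h2]
    ext S
    constructor
    · rintro ⟨T, hT, rfl⟩
      simp [huniv T hT]
    · intro hS
      obtain ⟨T, hT⟩ := hne
      refine ⟨T, hT, ?_⟩
      simp only [Set.mem_singleton_iff] at hS
      rw [hS, huniv T hT]
  have hrel : DD E Unit (Set.image f '' 𝒜) Set.univ := by
    rw [himg]
    exact (etaD E Set.univ Set.univ).2 rfl
  obtain ⟨B, hB, hf⟩ := T2 E f hrel
  refine ⟨B, hB, ?_⟩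
  have : (() : Unit) ∈ f '' B := by rw [hf]; trivial
  obtain ⟨y, hy, _⟩ := this
  exact ⟨y, hy⟩

/-- The `ε` invariant. -/
def epsP : Prop := DD E Empty {∅} ∅

lemma eps_iff {Y : Type} : DD E Y {∅} ∅ ↔ epsP E := by
  set f : Empty → Y := fun x => x.elim
  have himg : Set.image f '' ({∅} : Set (Set Empty)) = ({∅} : Set (Set Y)) := by
    rw [Set.image_singleton, Set.image_empty]
  constructor
  · intro h
    rw [← himg] at h
    obtain ⟨B, hB, _⟩ := T2 E f h
    have : B = ∅ := Set.eq_empty_of_isEmpty B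
    rwa [this] at hB
  · intro h
    have := T1 E f h
    rwa [himg, Set.image_empty] at this

/-- `{∅}` relates to nothing but possibly `∅`. -/
lemma sing_empty {Y : Type} {B : Set Y} (h : DD E Y {∅} B) : B = ∅ ∧ epsP E := by
  have hB : B = ∅ := by
    have := P2 E h
    rw [Set.sUnion_singleton] at this
    exact Set.eq_empty_of_subset_empty this
  subst hB
  exact ⟨rfl, (eps_iff E).1 h⟩


lemma image_univ_bool {α : Type} (f : Bool → α) : f '' Set.univ = {f false, f true} := by
  ext a
  simp only [Set.mem_insert_iff, Set.mem_singleton_iff]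
  constructor
  · rintro ⟨b, -, rfl⟩
    cases b
    · exact Or.inl rfl
    · exact Or.inr rfl
  · rintro (rfl | rfl)
    · exact ⟨false, trivial, rfl⟩
    · exact ⟨true, trivial, rfl⟩

lemma eta_univ_image {Y : Type} :
    (fun y => ({y} : Set Y)) '' (Set.univ : Set Y) = {S : Set Y | ∃ y, S = {y}} := by
  ext S
  constructor
  · rintro ⟨y, -, rfl⟩; exact ⟨y, rfl⟩
  · rintro ⟨y, rfl⟩; exact ⟨y, trivial, rfl⟩

/-- The `γ` invariant: whether `{univ} : Set (Set Bool)` relates to a proper subset. -/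
def gammaP : Prop := DD E Bool {Set.univ} {false}

lemma not_image_univ : Set.image not '' ({Set.univ} : Set (Set Bool)) = {Set.univ} := by
  rw [Set.image_singleton]
  have : not '' (Set.univ : Set Bool) = Set.univ := by
    rw [image_univ_bool]
    ext b; cases b <;> simp
  rw [this]

lemma gamma_swap (h : gammaP E) : DD E Bool {Set.univ} {true} := by
  have := T1 E not h
  rw [not_image_univ, Set.image_singleton] at this
  exact this

lemma gamma_swap' (h : DD E Bool {Set.univ} {true}) : gammaP E := by
  have := T1 E not h
  rw [not_image_univ, Set.image_singleton] at this
  exact this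

/-- Fibers of `fst` on `Bool × Bool`. -/
def fib4 : Set (Set (Bool × Bool)) := {S | ∃ x, S = {p : Bool × Bool | p.1 = x}}

lemma fib4_snd : Set.image (fun p : Bool × Bool => p.2) '' fib4 = {Set.univ} := by
  ext T
  simp only [Set.mem_singleton_iff]
  constructor
  · rintro ⟨S, ⟨x, rfl⟩, rfl⟩
    ext b
    simp only [Set.mem_univ, iff_true]
    exact ⟨(x, b), rfl, rfl⟩
  · rintro rfl
    refine ⟨{p : Bool × Bool | p.1 = false}, ⟨false, rfl⟩, ?_⟩
    ext b
    simp only [Set.mem_univ, iff_true]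
    exact ⟨(false, b), rfl, rfl⟩

lemma fib4_fst : Set.image (fun p : Bool × Bool => p.1) '' fib4
    = (fun y => ({y} : Set Bool)) '' (Set.univ : Set Bool) := by
  ext T
  constructor
  · rintro ⟨S, ⟨x, rfl⟩, rfl⟩
    refine ⟨x, trivial, ?_⟩
    ext b
    constructor
    · intro hb
      have hbx : b = x := hb
      exact ⟨(x, false), rfl, hbx.symm⟩
    · rintro ⟨p, hp, rfl⟩
      exact hp
  · rintro ⟨y, -, rfl⟩
    refine ⟨{p : Bool × Bool | p.1 = y}, ⟨y, rfl⟩, ?_⟩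
    ext b
    constructor
    · rintro ⟨p, hp, rfl⟩
      exact hp
    · intro hb
      have hbx : b = y := hb
      exact ⟨(y, false), rfl, hbx.symm⟩

lemma delta2_of_gamma (h : gammaP E) : DD E Bool {Set.univ} Set.univ := by
  -- pull back along snd
  have hpull : DD E Bool (Set.image (fun p : Bool × Bool => p.2) '' fib4) {false} := by
    rw [fib4_snd]; exact h
  obtain ⟨B4, hB4, hsnd⟩ := T2 E _ hpull
  -- every element of B4 has second component false
  have hmem : ∀ p ∈ B4, p.2 = false := by
    intro p hp
    have : p.2 ∈ (fun p : Bool × Bool => p.2) '' B4 := ⟨p, hp, rfl⟩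
    rw [hsnd] at this
    exact this
  -- fst image is univ
  have hfst := T1 E (fun p : Bool × Bool => p.1) hB4
  rw [fib4_fst] at hfst
  have hfst' : (fun p : Bool × Bool => p.1) '' B4 = Set.univ := (etaD E _ _).1 hfst
  -- B4 = {p | p.2 = false}
  have hB4eq : B4 = {p : Bool × Bool | p.2 = false} := by
    ext p
    constructor
    · intro hp; exact hmem p hp
    · intro hp
      have : p.1 ∈ (fun p : Bool × Bool => p.1) '' B4 := by rw [hfst']; trivial
      obtain ⟨q, hq, hq1⟩ := this
      have : q = p := by
        have h2 := hmem q hq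
        have : p.2 = false := hp
        cases p; cases q
        simp_all
      rwa [this] at hq
  -- push along xor
  have hx := T1 E (fun p : Bool × Bool => xor p.1 p.2) hB4
  have him1 : Set.image (fun p : Bool × Bool => xor p.1 p.2) '' fib4 = {Set.univ} := by
    ext T
    simp only [Set.mem_singleton_iff]
    constructor
    · rintro ⟨S, ⟨x, rfl⟩, rfl⟩
      ext b
      simp only [Set.mem_univ, iff_true]
      refine ⟨(x, xor x b), rfl, ?_⟩
      cases x <;> cases b <;> rfl
    · rintro rfl
      refine ⟨{p : Bool × Bool | p.1 = false}, ⟨false, rfl⟩, ?_⟩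
      ext b
      simp only [Set.mem_univ, iff_true]
      refine ⟨(false, b), rfl, ?_⟩
      cases b <;> rfl
  have him2 : (fun p : Bool × Bool => xor p.1 p.2) '' B4 = Set.univ := by
    rw [hB4eq]
    ext b
    simp only [Set.mem_univ, iff_true]
    refine ⟨(b, false), rfl, ?_⟩
    cases b <;> rfl
  rw [him1, him2] at hx
  exact hx

/-- Over `Unit`, `{univ}` relates exactly to `univ`. -/
lemma singUnit (B : Set Unit) : DD E Unit {Set.univ} B ↔ B = Set.univ := by
  have himg : (fun u => ({u} : Set Unit)) '' (Set.univ : Set Unit) = {Set.univ} := by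
    ext S
    constructor
    · rintro ⟨u, -, rfl⟩
      have : ({u} : Set Unit) = Set.univ := by ext x; simp
      simp [this]
    · intro hS
      refine ⟨(), trivial, ?_⟩
      simp only [Set.mem_singleton_iff] at hS
      rw [hS]; ext x; simp
  have := etaD E (Set.univ : Set Unit) B
  rw [himg] at this
  exact this

/-- The 4-trick: `{univ}` over `Bool` always relates to `univ` itself. -/
lemma delta2 : DD E Bool {Set.univ} Set.univ := by
  have h3 : ∃ B, DD E Bool {Set.univ} B ∧ B.Nonempty := by
    refine P3 (𝒜 := ({Set.univ} : Set (Set Bool))) E ⟨Set.univ, rfl⟩ ?_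
    rintro S (rfl : S = Set.univ)
    exact ⟨true, trivial⟩
  obtain ⟨B, hB, hBne⟩ := h3
  -- Either B = univ and we are done, or B = {c} for some c.
  by_cases hf : false ∈ B
  · by_cases ht : true ∈ B
    · have : B = Set.univ := by
        ext b; cases b <;> simp [hf, ht]
      rwa [this] at hB
    · -- B = {false}
      have hBc : B = {false} := by
        ext b; cases b <;> simp [hf, ht]
      rw [hBc] at hB
      exact delta2_of_gamma E hB
  · obtain ⟨c, hc⟩ := hBne
    have hct : c = true := by
      cases c
      · exact absurd hc hf
      · rfl
    have hc' : true ∈ B := hct ▸ hc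
    have hBc : B = {true} := by
      ext b
      cases b <;> simp [hf, hc']
    rw [hBc] at hB
    exact delta2_of_gamma E (gamma_swap' E hB)


/-- The wrap trick: relators of `{c, d}` also relate `{c ∪ d}`. -/
lemma wrapBool {Y : Type} (c d : Set Y) {C₀ : Set Bool} {B : Set Y}
    (h0 : DD E Bool {Set.univ} C₀)
    (hC : DD E Y ((fun x => bif x then d else c) '' C₀) B) :
    DD E Y {c ∪ d} B := by
  set j : Bool → Set Y := fun x => bif x then d else c with hjdef
  have hj : Set.image j '' ({Set.univ} : Set (Set Bool)) = {({c, d} : Set (Set Y))} := by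
    rw [Set.image_singleton]
    have : j '' Set.univ = {c, d} := by
      rw [image_univ_bool]
      rfl
    rw [this]
  have h1 : DD E (Set Y) {({c, d} : Set (Set Y))} (j '' C₀) := by
    have := T1 E j h0
    rwa [hj] at this
  have h2 := (multD E {({c, d} : Set (Set Y))} B).1 ⟨j '' C₀, h1, hC⟩
  rwa [Set.image_singleton, Set.sUnion_pair] at h2

lemma univ_ne_empty_unit : (Set.univ : Set Unit) ≠ ∅ := by
  intro h
  have : (() : Unit) ∈ (Set.univ : Set Unit) := trivial
  rw [h] at this
  exact this

/-- `β` is impossible: `{∅, univ}` over `Unit` does not relate to `∅`. -/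
lemma N1 : ¬ DD E Unit {∅, Set.univ} ∅ := by
  intro h
  have hC : DD E Unit ((fun x => bif x then Set.univ else (∅ : Set Unit)) '' Set.univ) ∅ := by
    rw [image_univ_bool]
    exact h
  have := wrapBool E ∅ Set.univ (delta2 E) hC
  rw [Set.empty_union] at this
  exact univ_ne_empty_unit ((singUnit E ∅).1 this).symm

lemma gamma_not_eps (hg : gammaP E) : ¬ epsP E := by
  intro he
  have heu : DD E Unit {∅} ∅ := (eps_iff E).2 he
  have hC : DD E Unit ((fun x => bif x then Set.univ else (∅ : Set Unit)) '' {false}) ∅ := by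
    rw [Set.image_singleton]
    exact heu
  have := wrapBool E ∅ Set.univ hg hC
  rw [Set.empty_union] at this
  exact univ_ne_empty_unit ((singUnit E ∅).1 this).symm

/- The auxiliary three-element type for the pull-back tricks. -/

/-- `f3 : Option Bool → Bool`, sending `none ↦ false` and `some _ ↦ true`. -/
def f3 : Option Bool → Bool := fun o => o.elim false (fun _ => true)

/-- `g3 : Option Bool → Bool`, sending `none ↦ false` and `some x ↦ x`. -/
def g3 : Option Bool → Bool := fun o => o.elim false id

lemma pair_univ_bool : ({false, true} : Set Bool) = Set.univ := by
  ext b; cases b <;> simp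

lemma eta_univ_bool :
    (fun y => ({y} : Set Bool)) '' (Set.univ : Set Bool)
      = {({false} : Set Bool), {true}} := image_univ_bool _

lemma f3_image_B3 {B₃ : Set (Option Bool)} (h : f3 '' B₃ = {false}) : B₃ = {none} := by
  have hmem : ∀ x ∈ B₃, x = none := by
    intro x hx
    have : f3 x ∈ f3 '' B₃ := ⟨x, hx, rfl⟩
    rw [h] at this
    have hfx : f3 x = false := this
    cases x with
    | none => rfl
    | some a => exact absurd hfx (by simp [f3])
  have hne : none ∈ B₃ := by
    have : false ∈ f3 '' B₃ := by rw [h]; rfl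
    obtain ⟨x, hx, hfx⟩ := this
    have := hmem x hx
    rwa [this] at hx
  ext x
  constructor
  · intro hx; exact hmem x hx
  · rintro rfl; exact hne

/-- `{{true}, univ}` never relates to `{false}`. -/
lemma X1 : ¬ DD E Bool {({true} : Set Bool), Set.univ} {false} := by
  intro h
  set 𝒜₃ : Set (Set (Option Bool)) := {{some true}, {none, some false}} with h𝒜₃
  have himg : Set.image f3 '' 𝒜₃ = {({true} : Set Bool), Set.univ} := by
    rw [h𝒜₃, Set.image_pair, Set.image_singleton, Set.image_pair]
    have h1 : f3 (some true) = true := rfl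
    have h2 : f3 none = false := rfl
    have h3 : f3 (some false) = true := rfl
    rw [h1, h2, h3]
    have : ({false, true} : Set Bool) = Set.univ := pair_univ_bool
    rw [this]
  rw [← himg] at h
  obtain ⟨B₃, hB₃, hf⟩ := T2 E f3 h
  have hB3 : B₃ = {none} := f3_image_B3 hf
  have hpush := T1 E g3 hB₃
  have hgimg : Set.image g3 '' 𝒜₃ = (fun y => ({y} : Set Bool)) '' (Set.univ : Set Bool) := by
    rw [h𝒜₃, Set.image_pair, Set.image_singleton, Set.image_pair]
    have h1 : g3 (some true) = true := rfl
    have h2 : g3 none = false := rfl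
    have h3 : g3 (some false) = false := rfl
    rw [h1, h2, h3, eta_univ_bool]
    ext S
    simp only [Set.mem_insert_iff, Set.mem_singleton_iff]
    constructor
    · rintro (rfl | rfl)
      · exact Or.inr rfl
      · exact Or.inl (by ext b; simp)
    · rintro (rfl | rfl)
      · exact Or.inr (by ext b; simp)
      · exact Or.inl rfl
  rw [hgimg] at hpush
  have := (etaD E Set.univ (g3 '' B₃)).1 hpush
  rw [hB3, Set.image_singleton] at this
  have h2 : g3 none = false := rfl
  rw [h2] at this
  have : true ∈ ({false} : Set Bool) := by rw [this]; trivial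
  simp at this

/-- `{{false}, {true}, univ}` never relates to `{false}`. -/
lemma X2 : ¬ DD E Bool {({false} : Set Bool), {true}, Set.univ} {false} := by
  intro h
  set 𝒜₃ : Set (Set (Option Bool)) := {{none}, {some true}, {none, some false}} with h𝒜₃
  have himg : Set.image f3 '' 𝒜₃ = {({false} : Set Bool), {true}, Set.univ} := by
    rw [h𝒜₃, Set.image_insert_eq, Set.image_insert_eq, Set.image_singleton]
    rw [Set.image_singleton, Set.image_singleton, Set.image_pair]
    have h1 : f3 (some true) = true := rfl
    have h2 : f3 none = false := rfl
    have h3 : f3 (some false) = true := rfl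
    rw [h1, h2, h3, pair_univ_bool]
  rw [← himg] at h
  obtain ⟨B₃, hB₃, hf⟩ := T2 E f3 h
  have hB3 : B₃ = {none} := f3_image_B3 hf
  have hpush := T1 E g3 hB₃
  have hgimg : Set.image g3 '' 𝒜₃ = (fun y => ({y} : Set Bool)) '' (Set.univ : Set Bool) := by
    rw [h𝒜₃, Set.image_insert_eq, Set.image_insert_eq, Set.image_singleton]
    rw [Set.image_singleton, Set.image_singleton, Set.image_pair]
    have h1 : g3 (some true) = true := rfl
    have h2 : g3 none = false := rfl
    have h3 : g3 (some false) = false := rfl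
    rw [h1, h2, h3, eta_univ_bool]
    ext S
    simp only [Set.mem_insert_iff, Set.mem_singleton_iff]
    constructor
    · rintro (rfl | rfl | rfl)
      · exact Or.inl rfl
      · exact Or.inr rfl
      · exact Or.inl (by ext b; simp)
    · rintro (rfl | rfl)
      · exact Or.inl rfl
      · exact Or.inr (Or.inl rfl)
  rw [hgimg] at hpush
  have := (etaD E Set.univ (g3 '' B₃)).1 hpush
  rw [hB3, Set.image_singleton] at this
  have h2 : g3 none = false := rfl
  rw [h2] at this
  have : true ∈ ({false} : Set Bool) := by rw [this]; trivial
  simp at this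


/-- The family of fibers of a map. -/
def fibs {Y I : Type} (q : Y → I) : Set (Set Y) := {S | ∃ i, S = q ⁻¹' {i}}

lemma image_preimage_of_surj {A B : Type} (q : A → B) (hs : ∀ b, ∃ a, q a = b) (i : B) :
    q '' (q ⁻¹' {i}) = {i} := by
  apply Set.Subset.antisymm
  · rintro b ⟨a, ha, rfl⟩
    exact ha
  · rintro b hb
    obtain ⟨a, ha⟩ := hs i
    have hbi : b = i := hb
    refine ⟨a, ?_, by rw [ha, hbi]⟩
    show q a ∈ ({i} : Set B)
    simp [ha]

/-- Engine, transversal version: under `γ`, a fiber family relates to any transversal. -/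
lemma engineT {W I : Type} (hg : gammaP E) (q : W → I) (t : I → W)
    (hqt : ∀ i, q (t i) = i) : DD E W (fibs q) (Set.range t) := by
  classical
  by_cases hI : Nonempty I
  case neg =>
    have h1 : fibs q = ∅ := by
      ext S
      simp only [fibs, Set.mem_setOf_eq, Set.mem_empty_iff_false, iff_false]
      rintro ⟨i, -⟩
      exact hI ⟨i⟩
    have h2 : Set.range t = ∅ := by
      ext w
      simp only [Set.mem_range, Set.mem_empty_iff_false, iff_false]
      rintro ⟨i, -⟩
      exact hI ⟨i⟩
    rw [h1, h2]
    exact (P1 E ∅).2 rfl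
  case pos =>
  set q' : W ⊕ I → I := Sum.elim q id with hq'
  set f : W ⊕ I → Bool := Sum.elim (fun _ => false) (fun _ => true) with hf
  have hfib_ne : ∀ i, ∃ w, q w = i := fun i => ⟨t i, hqt i⟩
  have hmemfib : ∀ (i : I) (w : W), q w = i → Sum.inl w ∈ q' ⁻¹' {i} := by
    intro i w hw
    show q' (Sum.inl w) ∈ ({i} : Set I)
    simp [hq', hw]
  have hmemfib' : ∀ i : I, Sum.inr i ∈ q' ⁻¹' ({i} : Set I) := by
    intro i
    show q' (Sum.inr i) ∈ ({i} : Set I)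
    simp [hq']
  have hfibuniv : ∀ i : I, f '' (q' ⁻¹' {i}) = Set.univ := by
    intro i
    ext b
    simp only [Set.mem_univ, iff_true]
    cases b
    · obtain ⟨w, hw⟩ := hfib_ne i
      exact ⟨Sum.inl w, hmemfib i w hw, rfl⟩
    · exact ⟨Sum.inr i, hmemfib' i, rfl⟩
  have himgf : Set.image f '' (fibs q') = {Set.univ} := by
    ext T
    simp only [Set.mem_singleton_iff]
    constructor
    · rintro ⟨S, ⟨i, rfl⟩, rfl⟩
      exact hfibuniv i
    · rintro rfl
      obtain ⟨i₀⟩ := hI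
      exact ⟨q' ⁻¹' {i₀}, ⟨i₀, rfl⟩, hfibuniv i₀⟩
  have hpull : DD E Bool (Set.image f '' (fibs q')) {true} := by
    rw [himgf]
    exact gamma_swap E hg
  obtain ⟨B', hB', hfB'⟩ := T2 E f hpull
  have hB'sub : ∀ x ∈ B', ∃ i, x = Sum.inr i := by
    intro x hx
    have hfx : f x ∈ f '' B' := ⟨x, hx, rfl⟩
    rw [hfB'] at hfx
    cases x with
    | inl w =>
        exfalso
        have : (false : Bool) ∈ ({true} : Set Bool) := hfx
        simp at this
    | inr i => exact ⟨i, rfl⟩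
  have hq'surj : ∀ i : I, ∃ x, q' x = i := fun i => ⟨Sum.inr i, by simp [hq']⟩
  have hq'img : Set.image q' '' fibs q' = (fun i => ({i} : Set I)) '' Set.univ := by
    ext T
    constructor
    · rintro ⟨S, ⟨i, rfl⟩, rfl⟩
      exact ⟨i, trivial, (image_preimage_of_surj q' hq'surj i).symm⟩
    · rintro ⟨i, -, rfl⟩
      exact ⟨q' ⁻¹' {i}, ⟨i, rfl⟩, image_preimage_of_surj q' hq'surj i⟩
  have heta := T1 E q' hB'
  rw [hq'img] at heta
  have hq'B : q' '' B' = Set.univ := (etaD E _ _).1 heta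
  have hB'eq : B' = Set.range Sum.inr := by
    ext x
    constructor
    · intro hx
      obtain ⟨i, rfl⟩ := hB'sub x hx
      exact ⟨i, rfl⟩
    · rintro ⟨i, rfl⟩
      have : i ∈ q' '' B' := by rw [hq'B]; trivial
      obtain ⟨x, hx, hxi⟩ := this
      obtain ⟨i', rfl⟩ := hB'sub x hx
      have hii : i' = i := by simpa [hq'] using hxi
      rwa [hii] at hx
  set h : W ⊕ I → W := Sum.elim id t with hh
  have hfib_eq : ∀ i : I, h '' (q' ⁻¹' {i}) = q ⁻¹' {i} := by
    intro i
    apply Set.Subset.antisymm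
    · rintro w ⟨x, hx, rfl⟩
      cases x with
      | inl v =>
          have : q v = i := hx
          show q (h (Sum.inl v)) ∈ ({i} : Set I)
          simpa [hh] using this
      | inr j =>
          have hji : j = i := hx
          show q (h (Sum.inr j)) ∈ ({i} : Set I)
          simp [hh, hqt, hji]
    · intro w hw
      exact ⟨Sum.inl w, hmemfib i w hw, rfl⟩
  have hhimg : Set.image h '' fibs q' = fibs q := by
    ext T
    constructor
    · rintro ⟨S, ⟨i, rfl⟩, rfl⟩
      exact ⟨i, (hfib_eq i).symm ▸ rfl⟩
    · rintro ⟨i, rfl⟩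
      exact ⟨q' ⁻¹' {i}, ⟨i, rfl⟩, hfib_eq i⟩
  have hhB : h '' B' = Set.range t := by
    rw [hB'eq]
    ext w
    constructor
    · rintro ⟨x, ⟨i, rfl⟩, rfl⟩
      exact ⟨i, rfl⟩
    · rintro ⟨i, rfl⟩
      exact ⟨Sum.inr i, ⟨i, rfl⟩, rfl⟩
  have := T1 E h hB'
  rwa [hhimg, hhB] at this


/-- Engine, hitting version: under `γ`, a fiber family relates to any set hitting
every fiber. -/
lemma engineH {Y I : Type} (hg : gammaP E) (q : Y → I)
    {B : Set Y} (hhit : ∀ i, ∃ y ∈ B, q y = i) : DD E Y (fibs q) B := by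
  classical
  by_cases hI : Nonempty I
  case neg =>
    haveI : IsEmpty Y := ⟨fun y => hI ⟨q y⟩⟩
    have h1 : fibs q = ∅ := by
      ext S
      simp only [fibs, Set.mem_setOf_eq, Set.mem_empty_iff_false, iff_false]
      rintro ⟨i, -⟩
      exact hI ⟨i⟩
    have h2 : B = ∅ := Set.eq_empty_of_isEmpty B
    rw [h1, h2]
    exact (P1 E ∅).2 rfl
  case pos =>
  set t : ↥B → (↥B × Y) := fun b => (b, ↑b) with ht
  set fst : (↥B × Y) → ↥B := fun p => p.1 with hfst
  set h : (↥B × Y) → Y := fun p => if q p.2 = q ↑p.1 then p.2 else ↑p.1 with hh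
  have hEng := engineT E hg fst t (fun b => rfl)
  have hfib_eq : ∀ b : ↥B, h '' (fst ⁻¹' {b}) = q ⁻¹' {q ↑b} := by
    intro b
    apply Set.Subset.antisymm
    · rintro y ⟨p, hp, rfl⟩
      have hpb : p.1 = b := hp
      show q (h p) ∈ ({q ↑b} : Set I)
      by_cases hc : q p.2 = q ↑p.1
      · simp only [hh, if_pos hc]
        rw [hc, hpb]
        rfl
      · simp only [hh, if_neg hc]
        rw [hpb]
        rfl
    · intro y hy
      have hqy : q y = q ↑b := hy
      refine ⟨(b, y), rfl, ?_⟩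
      simp only [hh, if_pos hqy]
  have hhimg : Set.image h '' fibs fst = fibs q := by
    ext T
    constructor
    · rintro ⟨S, ⟨b, rfl⟩, rfl⟩
      exact ⟨q ↑b, (hfib_eq b)⟩
    · rintro ⟨i, rfl⟩
      obtain ⟨y, hyB, hyi⟩ := hhit i
      refine ⟨fst ⁻¹' {⟨y, hyB⟩}, ⟨⟨y, hyB⟩, rfl⟩, ?_⟩
      rw [hfib_eq ⟨y, hyB⟩]
      show q ⁻¹' {q y} = q ⁻¹' {i}
      rw [hyi]
  have hhB : h '' Set.range t = B := by
    apply Set.Subset.antisymm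
    · rintro y ⟨p, ⟨b, rfl⟩, rfl⟩
      have : h (t b) = ↑b := by
        simp only [hh, ht, if_pos rfl]
      rw [this]
      exact b.2
    · intro y hy
      refine ⟨t ⟨y, hy⟩, ⟨⟨y, hy⟩, rfl⟩, ?_⟩
      simp only [hh, ht, if_pos rfl]
  have := T1 E h hEng
  rwa [hhimg, hhB] at this

lemma image_unit_univ {Y : Type} {S : Set Y} (h : S.Nonempty) :
    (fun _ : Y => ()) '' S = Set.univ := by
  ext u
  simp only [Set.mem_univ, iff_true]
  obtain ⟨y, hy⟩ := h
  exact ⟨y, hy, rfl⟩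

lemma push_unit_img {Y : Type} {𝒜 : Set (Set Y)} (hA : 𝒜.Nonempty)
    (hne : ∀ S ∈ 𝒜, S.Nonempty) :
    Set.image (fun _ : Y => ()) '' 𝒜 = {Set.univ} := by
  ext T
  simp only [Set.mem_singleton_iff]
  constructor
  · rintro ⟨S, hS, rfl⟩
    exact image_unit_univ (hne S hS)
  · rintro rfl
    obtain ⟨S, hS⟩ := hA
    exact ⟨S, hS, image_unit_univ (hne S hS)⟩

lemma empty_ne_bb : (∅ : Set Bool) ≠ {true} := by
  intro hcon
  have : true ∈ (∅ : Set Bool) := by rw [hcon]; rfl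
  exact this

lemma aa_ne_bb : ({false} : Set Bool) ≠ {true} := by
  intro hcon
  have : false ∈ ({true} : Set Bool) := by rw [← hcon]; rfl
  simp at this

/-- Seed lemma: under `γ`, `{∅, {true}}` over `Bool` relates to nothing. -/
lemma seedG (hg : gammaP E) (B₂ : Set Bool) : ¬ DD E Bool {∅, {true}} B₂ := by
  classical
  intro h2
  -- The three-element subtype of `Set Bool`.
  set Z := ↥({∅, {false}, {true}} : Set (Set Bool)) with hZ
  set q : Z → Bool := fun z => if z.val = {true} then true else false with hq
  set t : Bool → Z := fun x =>
    bif x then ⟨{true}, by simp⟩ else ⟨∅, by simp⟩ with htdef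
  have hqt : ∀ x, q (t x) = x := by
    intro x
    cases x
    · show q ⟨∅, _⟩ = false
      simp only [hq, if_neg empty_ne_bb]
    · show q ⟨{true}, _⟩ = true
      simp only [hq, if_pos rfl]
  have hEng := engineT E hg q t hqt
  -- compute the image under `Subtype.val`
  have hfib_f : Subtype.val '' (q ⁻¹' {false}) = ({∅, {false}} : Set (Set Bool)) := by
    apply Set.Subset.antisymm
    · rintro S ⟨z, hz, rfl⟩
      have hzq : q z = false := hz
      obtain ⟨S', hS'⟩ := z
      rcases hS' with rfl | rfl | rfl
      · exact Or.inl rfl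
      · exact Or.inr rfl
      · exfalso
        simp [hq] at hzq
    · rintro S (rfl | rfl)
      · refine ⟨⟨∅, by simp⟩, ?_, rfl⟩
        show q _ = false
        simp only [hq, if_neg empty_ne_bb]
      · refine ⟨⟨{false}, by simp⟩, ?_, rfl⟩
        show q _ = false
        simp only [hq, if_neg aa_ne_bb]
  have hfib_t : Subtype.val '' (q ⁻¹' {true}) = ({({true} : Set Bool)} : Set (Set Bool)) := by
    apply Set.Subset.antisymm
    · rintro S ⟨z, hz, rfl⟩
      have hzq : q z = true := hz
      by_cases hc : z.val = {true}
      · exact hc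
      · exfalso
        have : q z = false := by simp only [hq, if_neg hc]
        rw [this] at hzq
        exact absurd hzq (by simp)
    · rintro S rfl
      refine ⟨⟨{true}, by simp⟩, ?_, rfl⟩
      show q _ = true
      simp only [hq, if_pos rfl]
  have himg : Set.image Subtype.val '' fibs q
      = ({{∅, {false}}, {({true} : Set Bool)}} : Set (Set (Set Bool))) := by
    ext T
    constructor
    · rintro ⟨S, ⟨i, rfl⟩, rfl⟩
      cases i
      · exact Or.inl hfib_f
      · exact Or.inr hfib_t
    · rintro (rfl | rfl)
      · exact ⟨q ⁻¹' {false}, ⟨false, rfl⟩, hfib_f⟩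
      · exact ⟨q ⁻¹' {true}, ⟨true, rfl⟩, hfib_t⟩
  have hrange : Subtype.val '' Set.range t = ({∅, {true}} : Set (Set Bool)) := by
    apply Set.Subset.antisymm
    · rintro S ⟨z, ⟨x, rfl⟩, rfl⟩
      cases x
      · exact Or.inl rfl
      · exact Or.inr rfl
    · rintro S (rfl | rfl)
      · exact ⟨t false, ⟨false, rfl⟩, rfl⟩
      · exact ⟨t true, ⟨true, rfl⟩, rfl⟩
  have hEng' := T1 E (Subtype.val : Z → Set Bool) hEng
  rw [himg, hrange] at hEng'
  -- now use multiplicativity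
  have hmult := (multD E ({{∅, {false}}, {({true} : Set Bool)}}) B₂).1 ⟨_, hEng', h2⟩
  have hsU : Set.sUnion '' ({{∅, {false}}, {({true} : Set Bool)}} : Set (Set (Set Bool)))
      = ({({false} : Set Bool), {true}} : Set (Set Bool)) := by
    rw [Set.image_pair]
    rw [Set.sUnion_pair, Set.sUnion_singleton, Set.empty_union]
  rw [hsU, ← eta_univ_bool] at hmult
  have hB₂ : B₂ = Set.univ := (etaD E _ _).1 hmult
  have hsub := P2 E h2
  rw [Set.sUnion_pair, Set.empty_union, hB₂] at hsub
  have : false ∈ ({true} : Set Bool) := hsub trivial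
  simp at this

/-- Under `γ`, `{∅, univ}` over `Unit` does not relate to `univ` (no `α`). -/
lemma alphaKill (hg : gammaP E) : ¬ DD E Unit {∅, Set.univ} Set.univ := by
  intro hα
  set f : Bool → Unit := fun _ => ()
  have himg : Set.image f '' ({∅, {true}} : Set (Set Bool))
      = ({∅, Set.univ} : Set (Set Unit)) := by
    rw [Set.image_pair, Set.image_empty]
    have : f '' {true} = Set.univ := image_unit_univ ⟨true, rfl⟩
    rw [this]
  rw [← himg] at hα
  obtain ⟨B₂, hB₂, -⟩ := T2 E f hα
  exact seedG E hg B₂ hB₂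

/-- Under `γ`, a family containing `∅` relates to nothing. -/
lemma gamma_no_empty (hg : gammaP E) {Y : Type} {𝒜 : Set (Set Y)} {B : Set Y}
    (hE0 : ∅ ∈ 𝒜) : ¬ DD E Y 𝒜 B := by
  classical
  intro h
  by_cases hex : ∃ S ∈ 𝒜, S.Nonempty
  · obtain ⟨S₀, hS₀, hS₀ne⟩ := hex
    set f : Y → Unit := fun _ => ()
    have himg : Set.image f '' 𝒜 = ({∅, Set.univ} : Set (Set Unit)) := by
      ext T
      constructor
      · rintro ⟨S, hS, rfl⟩
        rcases Set.eq_empty_or_nonempty S with rfl | hSne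
        · exact Or.inl (Set.image_empty f)
        · exact Or.inr (image_unit_univ hSne)
      · rintro (rfl | rfl)
        · exact ⟨∅, hE0, Set.image_empty f⟩
        · exact ⟨S₀, hS₀, image_unit_univ hS₀ne⟩
    have hT1 := T1 E f h
    rw [himg] at hT1
    rcases Set.eq_empty_or_nonempty B with rfl | hBne
    · rw [Set.image_empty] at hT1
      exact N1 E hT1
    · rw [image_unit_univ hBne] at hT1
      exact alphaKill E hg hT1
  · have h𝒜 : 𝒜 = {∅} := by
      ext S
      constructor
      · intro hS
        have : ¬ S.Nonempty := fun hne => hex ⟨S, hS, hne⟩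
        rw [Set.not_nonempty_iff_eq_empty] at this
        exact this
      · rintro rfl
        exact hE0
    rw [h𝒜] at h
    exact gamma_not_eps E hg (sing_empty E h).2

lemma bool_set_classify (T : Set Bool) (h : T.Nonempty) :
    T = {false} ∨ T = {true} ∨ T = Set.univ := by
  by_cases hf : false ∈ T <;> by_cases ht : true ∈ T
  · right; right; ext b; cases b <;> simp [hf, ht]
  · left; ext b; cases b <;> simp [hf, ht]
  · right; left; ext b; cases b <;> simp [hf, ht]
  · exfalso
    obtain ⟨c, hc⟩ := h
    cases c
    · exact hf hc
    · exact ht hc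


/-- Under `γ`, every member of a relating family meets the relatum. -/
lemma N4 (hg : gammaP E) {Y : Type} {𝒜 : Set (Set Y)} {B : Set Y}
    (h : DD E Y 𝒜 B) {S : Set Y} (hS : S ∈ 𝒜) : (S ∩ B).Nonempty := by
  classical
  by_cases hE0 : ∅ ∈ 𝒜
  · exact absurd h (gamma_no_empty E hg hE0)
  have hall : ∀ S' ∈ 𝒜, S'.Nonempty := by
    intro S' hS'
    rcases Set.eq_empty_or_nonempty S' with rfl | hn
    · exact absurd hS' hE0
    · exact hn
  have hSne : S.Nonempty := hall S hS
  by_contra hc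
  rw [Set.not_nonempty_iff_eq_empty] at hc
  set χ : Y → Bool := fun y => if y ∈ S then true else false with hχ
  have hT1 := T1 E χ h
  have hBsub : ∀ b ∈ χ '' B, b = false := by
    rintro b ⟨y, hy, rfl⟩
    have hyS : y ∉ S := fun hyS => (Set.eq_empty_iff_forall_notMem.1 hc y) ⟨hyS, hy⟩
    simp [hχ, hyS]
  have hSim : χ '' S = {true} := by
    apply Set.Subset.antisymm
    · rintro b ⟨y, hy, rfl⟩
      simp [hχ, hy]
    · rintro b rfl
      obtain ⟨y, hy⟩ := hSne
      exact ⟨y, hy, by simp [hχ, hy]⟩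
  set 𝒜₂ := Set.image χ '' 𝒜 with h𝒜₂
  have hmem𝒜₂ : ∀ T ∈ 𝒜₂, T = {false} ∨ T = {true} ∨ T = Set.univ := by
    rintro T ⟨S', hS', rfl⟩
    exact bool_set_classify _ ((hall S' hS').image χ)
  have hbb : ({true} : Set Bool) ∈ 𝒜₂ := ⟨S, hS, hSim⟩
  rcases Set.eq_empty_or_nonempty B with rfl | hBne
  · have hpu := T1 E (fun _ : Y => ()) h
    rw [push_unit_img ⟨S, hS⟩ hall, Set.image_empty] at hpu
    exact univ_ne_empty_unit ((singUnit E _).1 hpu).symm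
  have hBim : χ '' B = {false} := by
    apply Set.Subset.antisymm
    · intro b hb
      exact hBsub b hb
    · rintro b rfl
      obtain ⟨y, hy⟩ := hBne
      have := hBsub _ ⟨y, hy, rfl⟩
      exact ⟨y, hy, this⟩
  rw [hBim] at hT1
  by_cases haa : ({false} : Set Bool) ∈ 𝒜₂ <;> by_cases huu : (Set.univ : Set Bool) ∈ 𝒜₂
  · have h2 : 𝒜₂ = {({false} : Set Bool), {true}, Set.univ} := by
      apply Set.Subset.antisymm
      · intro T hT
        rcases hmem𝒜₂ T hT with rfl | rfl | rfl
        · exact Or.inl rfl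
        · exact Or.inr (Or.inl rfl)
        · exact Or.inr (Or.inr rfl)
      · rintro T (rfl | rfl | rfl)
        exacts [haa, hbb, huu]
    rw [h2] at hT1
    exact X2 E hT1
  · have h2 : 𝒜₂ = {({false} : Set Bool), {true}} := by
      apply Set.Subset.antisymm
      · intro T hT
        rcases hmem𝒜₂ T hT with rfl | rfl | rfl
        · exact Or.inl rfl
        · exact Or.inr rfl
        · exact absurd hT huu
      · rintro T (rfl | rfl)
        exacts [haa, hbb]
    rw [h2, ← eta_univ_bool] at hT1
    have hfu : ({false} : Set Bool) = Set.univ := (etaD E _ _).1 hT1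
    have : true ∈ ({false} : Set Bool) := by rw [hfu]; trivial
    simp at this
  · have h2 : 𝒜₂ = {({true} : Set Bool), Set.univ} := by
      apply Set.Subset.antisymm
      · intro T hT
        rcases hmem𝒜₂ T hT with rfl | rfl | rfl
        · exact absurd hT haa
        · exact Or.inl rfl
        · exact Or.inr rfl
      · rintro T (rfl | rfl)
        exacts [hbb, huu]
    rw [h2] at hT1
    exact X1 E hT1
  · have h2 : 𝒜₂ = {({true} : Set Bool)} := by
      apply Set.Subset.antisymm
      · intro T hT
        rcases hmem𝒜₂ T hT with rfl | rfl | rfl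
        · exact absurd hT haa
        · exact rfl
        · exact absurd hT huu
      · rintro T rfl
        exact hbb
    rw [h2] at hT1
    have hsub := P2 E hT1
    rw [Set.sUnion_singleton] at hsub
    have : false ∈ ({true} : Set Bool) := hsub rfl
    simp at this

/-- Under `γ`, the Barr conditions suffice for relating. -/
lemma gamma_rel_of_barr (hg : gammaP E) {Y : Type} {𝒜 : Set (Set Y)} {B : Set Y}
    (h1 : B ⊆ ⋃₀ 𝒜) (h2 : ∀ S ∈ 𝒜, (S ∩ B).Nonempty) : DD E Y 𝒜 B := by
  classical
  by_cases hE0 : ∅ ∈ 𝒜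
  · obtain ⟨y, hy⟩ := h2 ∅ hE0
    exact absurd hy.1 (Set.notMem_empty y)
  set Sgm := {p : Set Y × Y // p.1 ∈ 𝒜 ∧ p.2 ∈ p.1} with hSgm
  set q : Sgm → ↥𝒜 := fun σ => ⟨σ.1.1, σ.2.1⟩ with hqdef
  set sd : Sgm → Y := fun σ => σ.1.2 with hsd
  set Bsig : Set Sgm := {σ | σ.1.2 ∈ B} with hBsig
  have hengine : DD E Sgm (fibs q) Bsig := by
    apply engineH E hg q
    rintro ⟨S, hS⟩
    obtain ⟨y, hyS, hyB⟩ := h2 S hS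
    exact ⟨⟨(S, y), hS, hyS⟩, hyB, rfl⟩
  have hfib : ∀ i : ↥𝒜, sd '' (q ⁻¹' {i}) = i.val := by
    rintro ⟨S, hS⟩
    apply Set.Subset.antisymm
    · rintro y ⟨σ, hσ, rfl⟩
      have hq : q σ = ⟨S, hS⟩ := hσ
      have h11 : σ.1.1 = S := congrArg Subtype.val hq
      have h22 : σ.1.2 ∈ σ.1.1 := σ.2.2
      rw [h11] at h22
      exact h22
    · intro y hy
      refine ⟨⟨(S, y), hS, hy⟩, rfl, rfl⟩
  have himg : Set.image sd '' fibs q = 𝒜 := by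
    ext T
    constructor
    · rintro ⟨S, ⟨i, rfl⟩, rfl⟩
      rw [hfib i]
      exact i.2
    · intro hT
      exact ⟨q ⁻¹' {⟨T, hT⟩}, ⟨⟨T, hT⟩, rfl⟩, hfib ⟨T, hT⟩⟩
  have hB : sd '' Bsig = B := by
    apply Set.Subset.antisymm
    · rintro y ⟨σ, hσ, rfl⟩
      exact hσ
    · intro y hy
      obtain ⟨S, hS, hyS⟩ := h1 hy
      exact ⟨⟨(S, y), hS, hyS⟩, hy, rfl⟩
  have := T1 E sd hengine
  rwa [himg, hB] at this

/-- Characterization of `DD` in the `γ` case: it is the Barr extension. -/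
lemma gamma_char (hg : gammaP E) {Y : Type} (𝒜 : Set (Set Y)) (B : Set Y) :
    DD E Y 𝒜 B ↔ (B ⊆ ⋃₀ 𝒜 ∧ ∀ S ∈ 𝒜, (S ∩ B).Nonempty) :=
  ⟨fun h => ⟨P2 E h, fun _ hS => N4 E hg h hS⟩,
   fun ⟨h1, h2⟩ => gamma_rel_of_barr E hg h1 h2⟩


lemma fibs_img_eta {Y I : Type} (q : Y → I) (hs : ∀ i, ∃ y, q y = i) :
    Set.image q '' fibs q = (fun i => ({i} : Set I)) '' Set.univ := by
  ext T
  constructor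
  · rintro ⟨S, ⟨i, rfl⟩, rfl⟩
    exact ⟨i, trivial, (image_preimage_of_surj q hs i).symm⟩
  · rintro ⟨i, -, rfl⟩
    exact ⟨q ⁻¹' {i}, ⟨i, rfl⟩, image_preimage_of_surj q hs i⟩

/-- Without `γ`, `{univ}` relates only to `univ`. -/
lemma nog_sing_univ (hng : ¬ gammaP E) {Y : Type} {B : Set Y}
    (h : DD E Y {Set.univ} B) : B = Set.univ := by
  classical
  by_cases hY : Nonempty Y
  case neg =>
    haveI : IsEmpty Y := not_nonempty_iff.1 hY
    rw [Set.eq_empty_of_isEmpty B, Set.eq_empty_of_isEmpty (Set.univ : Set Y)]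
  case pos =>
  obtain ⟨y⟩ := hY
  have huniv_ne : (Set.univ : Set Y).Nonempty := ⟨y, trivial⟩
  have hBne : B.Nonempty := by
    have hpu := T1 E (fun _ : Y => ()) h
    rw [push_unit_img (𝒜 := ({Set.univ} : Set (Set Y))) ⟨Set.univ, rfl⟩
      (by rintro S (rfl : S = Set.univ); exact huniv_ne)] at hpu
    have him := (singUnit E _).1 hpu
    rcases Set.eq_empty_or_nonempty B with rfl | hn
    · rw [Set.image_empty] at him
      exact absurd him.symm univ_ne_empty_unit
    · exact hn
  by_contra hc
  have hy₀ : ∃ y₀, y₀ ∉ B := by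
    by_contra hall
    push_neg at hall
    exact hc (Set.eq_univ_of_forall hall)
  obtain ⟨y₀, hy₀⟩ := hy₀
  set χ : Y → Bool := fun y => if y ∈ B then true else false with hχ
  have himg : Set.image χ '' ({Set.univ} : Set (Set Y)) = {Set.univ} := by
    rw [Set.image_singleton]
    have : χ '' Set.univ = Set.univ := by
      ext b
      simp only [Set.mem_univ, iff_true]
      cases b
      · exact ⟨y₀, trivial, by simp [hχ, hy₀]⟩
      · obtain ⟨y₁, hy₁⟩ := hBne
        exact ⟨y₁, trivial, by simp [hχ, hy₁]⟩
    rw [this]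
  have hBim : χ '' B = {true} := by
    apply Set.Subset.antisymm
    · rintro b ⟨z, hz, rfl⟩
      simp [hχ, hz]
    · rintro b rfl
      obtain ⟨y₁, hy₁⟩ := hBne
      exact ⟨y₁, hy₁, by simp [hχ, hy₁]⟩
  have hT1 := T1 E χ h
  rw [himg, hBim] at hT1
  exact hng (gamma_swap' E hT1)

/-- Without `γ`, `{{true}, univ}` does not relate to `{true}`. -/
lemma nog_X7 (hng : ¬ gammaP E) : ¬ DD E Bool {({true} : Set Bool), Set.univ} {true} := by
  intro h
  have hC : DD E Bool
      ((fun x => bif x then Set.univ else ({true} : Set Bool)) '' Set.univ) {true} := by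
    rw [image_univ_bool]
    exact h
  have := wrapBool E {true} Set.univ (delta2 E) hC
  rw [Set.union_univ] at this
  exact hng (gamma_swap' E this)

/-- Without `γ`, fiber families relate only to `univ`. -/
lemma nog_fibs (hng : ¬ gammaP E) {Y I : Type} (q : Y → I) (hsurj : ∀ i, ∃ y, q y = i)
    {B : Set Y} (h : DD E Y (fibs q) B) : B = Set.univ := by
  classical
  have hhit : ∀ i, ∃ y ∈ B, q y = i := by
    have hT := T1 E q h
    rw [fibs_img_eta q hsurj] at hT
    have hqB : q '' B = Set.univ := (etaD E _ _).1 hT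
    intro i
    have : i ∈ q '' B := by rw [hqB]; trivial
    obtain ⟨y, hy, hyi⟩ := this
    exact ⟨y, hy, hyi⟩
  by_contra hc
  have hy₀ : ∃ y₀, y₀ ∉ B := by
    by_contra hall
    push_neg at hall
    exact hc (Set.eq_univ_of_forall hall)
  obtain ⟨y₀, hy₀⟩ := hy₀
  by_cases hone : ∀ y, q y = q y₀
  · have hfq : fibs q = {Set.univ} := by
      ext S
      simp only [Set.mem_singleton_iff]
      constructor
      · rintro ⟨i, rfl⟩
        obtain ⟨y, hy⟩ := hsurj i
        apply Set.eq_univ_of_forall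
        intro y'
        show q y' ∈ ({i} : Set I)
        have : q y' = i := by rw [hone y', ← hone y, hy]
        simp [this]
      · rintro rfl
        refine ⟨q y₀, ?_⟩
        apply Set.Subset.antisymm
        · intro y' _
          show q y' ∈ ({q y₀} : Set I)
          simp [hone y']
        · intro y' _
          trivial
    rw [hfq] at h
    have := nog_sing_univ E hng h
    rw [this] at hy₀
    exact hy₀ trivial
  · push_neg at hone
    obtain ⟨y₁, hy₁⟩ := hone
    set k : Y → Bool := fun y => if q y = q y₀ then (if y ∈ B then true else false) else true
      with hk
    have hfib_true : ∀ i, i ≠ q y₀ → k '' (q ⁻¹' {i}) = {true} := by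
      intro i hi
      apply Set.Subset.antisymm
      · rintro b ⟨y, hy, rfl⟩
        have hqy : q y = i := hy
        simp [hk, hqy, hi]
      · rintro b rfl
        obtain ⟨y, hy⟩ := hsurj i
        refine ⟨y, by simp [hy], ?_⟩
        simp [hk, hy, hi]
    have hfib_univ : k '' (q ⁻¹' {q y₀}) = Set.univ := by
      ext b
      simp only [Set.mem_univ, iff_true]
      cases b
      · exact ⟨y₀, rfl, by simp [hk, hy₀]⟩
      · obtain ⟨y, hyB, hyq⟩ := hhit (q y₀)
        refine ⟨y, by simp [hyq], ?_⟩
        simp [hk, hyq, hyB]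
    have hkimg : Set.image k '' fibs q = {({true} : Set Bool), Set.univ} := by
      ext T
      constructor
      · rintro ⟨S, ⟨i, rfl⟩, rfl⟩
        by_cases hi : i = q y₀
        · subst hi
          exact Or.inr hfib_univ
        · exact Or.inl (hfib_true i hi)
      · rintro (rfl | rfl)
        · exact ⟨q ⁻¹' {q y₁}, ⟨q y₁, rfl⟩, hfib_true (q y₁) hy₁⟩
        · exact ⟨q ⁻¹' {q y₀}, ⟨q y₀, rfl⟩, hfib_univ⟩
    have hkB : k '' B = {true} := by
      apply Set.Subset.antisymm
      · rintro b ⟨y, hy, rfl⟩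
        by_cases hc2 : q y = q y₀ <;> simp [hk, hc2, hy]
      · rintro b rfl
        obtain ⟨y, hyB, hyq⟩ := hhit (q y₀)
        refine ⟨y, hyB, ?_⟩
        simp [hk, hyq, hyB]
    have hT := T1 E k h
    rw [hkimg, hkB] at hT
    exact nog_X7 E hng hT

/-- Without `γ`, families of nonempty sets relate only to their union. -/
lemma nog_unique (hng : ¬ gammaP E) {Y : Type} {𝒜 : Set (Set Y)}
    (hall : ∀ S ∈ 𝒜, S.Nonempty) {B : Set Y} (h : DD E Y 𝒜 B) : B = ⋃₀ 𝒜 := by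
  classical
  set Sgm := {p : Set Y × Y // p.1 ∈ 𝒜 ∧ p.2 ∈ p.1} with hSgm
  set q : Sgm → ↥𝒜 := fun σ => ⟨σ.1.1, σ.2.1⟩ with hqdef
  set sd : Sgm → Y := fun σ => σ.1.2 with hsd
  have hfib : ∀ i : ↥𝒜, sd '' (q ⁻¹' {i}) = i.val := by
    rintro ⟨S, hS⟩
    apply Set.Subset.antisymm
    · rintro y ⟨σ, hσ, rfl⟩
      have hq : q σ = ⟨S, hS⟩ := hσ
      have h11 : σ.1.1 = S := congrArg Subtype.val hq
      have h22 : σ.1.2 ∈ σ.1.1 := σ.2.2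
      rw [h11] at h22
      exact h22
    · intro y hy
      refine ⟨⟨(S, y), hS, hy⟩, rfl, rfl⟩
  have himg : Set.image sd '' fibs q = 𝒜 := by
    ext T
    constructor
    · rintro ⟨S, ⟨i, rfl⟩, rfl⟩
      rw [hfib i]
      exact i.2
    · intro hT
      exact ⟨q ⁻¹' {⟨T, hT⟩}, ⟨⟨T, hT⟩, rfl⟩, hfib ⟨T, hT⟩⟩
  rw [← himg] at h
  obtain ⟨B', hB', rfl⟩ := T2 E sd h
  have hq_surj : ∀ i : ↥𝒜, ∃ σ, q σ = i := by
    rintro ⟨S, hS⟩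
    obtain ⟨y, hy⟩ := hall S hS
    exact ⟨⟨(S, y), hS, hy⟩, rfl⟩
  have hB'univ := nog_fibs E hng q hq_surj hB'
  rw [hB'univ]
  ext y
  constructor
  · rintro ⟨σ, -, rfl⟩
    exact ⟨σ.1.1, σ.2.1, σ.2.2⟩
  · rintro ⟨S, hS, hy⟩
    exact ⟨⟨(S, y), hS, hy⟩, trivial, rfl⟩

/-- Without `γ`: full characterization on families of nonempty sets. -/
lemma nog_core (hng : ¬ gammaP E) {Y : Type} {𝒜 : Set (Set Y)}
    (hA : 𝒜.Nonempty) (hall : ∀ S ∈ 𝒜, S.Nonempty) (B : Set Y) :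
    DD E Y 𝒜 B ↔ B = ⋃₀ 𝒜 := by
  constructor
  · exact nog_unique E hng hall
  · rintro rfl
    obtain ⟨B₀, hB₀, -⟩ := P3 E hA hall
    have := nog_unique E hng hall hB₀
    rwa [this] at hB₀

/-- Without `γ`, an `∅` member is transparent. -/
lemma nog_transparent (hng : ¬ gammaP E) {Y : Type} {𝒜₀ : Set (Set Y)}
    (hA : 𝒜₀.Nonempty) (hall : ∀ S ∈ 𝒜₀, S.Nonempty) (B : Set Y) :
    DD E Y (insert ∅ 𝒜₀) B ↔ DD E Y 𝒜₀ B := by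
  classical
  obtain ⟨S₀, hS₀⟩ := hA
  set 𝔄 : Set (Set (Set Y)) :=
    insert {∅, S₀} ((fun S => ({S} : Set (Set Y))) '' (𝒜₀ \ {S₀})) with h𝔄
  have h𝔄ne : 𝔄.Nonempty := ⟨{∅, S₀}, Or.inl rfl⟩
  have h𝔄all : ∀ T ∈ 𝔄, T.Nonempty := by
    rintro T (rfl | ⟨S, hS, rfl⟩)
    · exact ⟨∅, Or.inl rfl⟩
    · exact ⟨S, rfl⟩
  have hsU : ⋃₀ 𝔄 = insert ∅ 𝒜₀ := by
    ext S
    constructor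
    · rintro ⟨T, hT, hmem⟩
      rcases hT with rfl | ⟨S', hS', rfl⟩
      · rcases hmem with rfl | rfl
        · exact Or.inl rfl
        · exact Or.inr hS₀
      · have : S = S' := hmem
        rw [this]
        exact Or.inr hS'.1
    · rintro (rfl | hS)
      · exact ⟨{∅, S₀}, Or.inl rfl, Or.inl rfl⟩
      · by_cases hss : S = S₀
        · exact ⟨{∅, S₀}, Or.inl rfl, Or.inr (by rw [hss]; rfl)⟩
        · exact ⟨{S}, Or.inr ⟨S, ⟨hS, hss⟩, rfl⟩, rfl⟩
  have himgU : Set.sUnion '' 𝔄 = 𝒜₀ := by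
    ext S
    constructor
    · rintro ⟨T, hT, rfl⟩
      rcases hT with rfl | ⟨S', hS', rfl⟩
      · rw [Set.sUnion_pair, Set.empty_union]
        exact hS₀
      · rw [Set.sUnion_singleton]
        exact hS'.1
    · intro hS
      by_cases hss : S = S₀
      · refine ⟨{∅, S₀}, Or.inl rfl, ?_⟩
        rw [Set.sUnion_pair, Set.empty_union, hss]
      · exact ⟨{S}, Or.inr ⟨S, ⟨hS, hss⟩, rfl⟩, Set.sUnion_singleton S⟩
  have h𝔄rel : ∀ 𝒞, DD E (Set Y) 𝔄 𝒞 ↔ 𝒞 = insert ∅ 𝒜₀ := by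
    intro 𝒞
    rw [nog_core E hng h𝔄ne h𝔄all 𝒞, hsU]
  constructor
  · intro h
    have hmid : ∃ 𝒞, DD E (Set Y) 𝔄 𝒞 ∧ DD E Y 𝒞 B :=
      ⟨insert ∅ 𝒜₀, (h𝔄rel _).2 rfl, h⟩
    have := (multD E 𝔄 B).1 hmid
    rwa [himgU] at this
  · intro h
    have : DD E Y (Set.sUnion '' 𝔄) B := by rwa [himgU]
    obtain ⟨𝒞, h𝒞, hrel⟩ := (multD E 𝔄 B).2 this
    rwa [(h𝔄rel 𝒞).1 h𝒞] at hrel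

lemma empty_or_sing {Y : Type} {𝒜 : Set (Set Y)} (h : ¬ (𝒜 \ {∅}).Nonempty) :
    𝒜 = ∅ ∨ 𝒜 = {∅} := by
  rw [Set.not_nonempty_iff_eq_empty, Set.diff_eq_empty] at h
  rcases Set.eq_empty_or_nonempty 𝒜 with rfl | ⟨S, hS⟩
  · exact Or.inl rfl
  · right
    apply Set.Subset.antisymm h
    intro T hT
    have hs : S = ∅ := h hS
    have ht : T = ∅ := hT
    rw [ht, ← hs]
    exact hS

/-- The `¬γ, ε` characterization: relational image. -/
lemma nog_eps_char (hng : ¬ gammaP E) (he : epsP E) {Y : Type} (𝒜 : Set (Set Y))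
    (B : Set Y) : DD E Y 𝒜 B ↔ B = ⋃₀ 𝒜 := by
  by_cases hA0 : (𝒜 \ {∅}).Nonempty
  · have hall : ∀ S ∈ 𝒜 \ {∅}, S.Nonempty := by
      rintro S ⟨hS, hSne⟩
      exact Set.nonempty_iff_ne_empty.2 hSne
    have hUeq : ⋃₀ 𝒜 = ⋃₀ (𝒜 \ {∅}) := by
      ext y
      constructor
      · rintro ⟨S, hS, hy⟩
        refine ⟨S, ⟨hS, ?_⟩, hy⟩
        rintro rfl
        exact hy
      · rintro ⟨S, hS, hy⟩
        exact ⟨S, hS.1, hy⟩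
    have key : DD E Y 𝒜 B ↔ DD E Y (𝒜 \ {∅}) B := by
      by_cases hE0 : ∅ ∈ 𝒜
      · have h𝒜 : 𝒜 = insert ∅ (𝒜 \ {∅}) := by
          ext S
          constructor
          · intro hS
            by_cases hss : S = ∅
            · exact Or.inl hss
            · exact Or.inr ⟨hS, hss⟩
          · rintro (rfl | hS)
            · exact hE0
            · exact hS.1
        conv_lhs => rw [h𝒜]
        exact nog_transparent E hng hA0 hall B
      · have h𝒜 : 𝒜 \ {∅} = 𝒜 := by
          apply Set.Subset.antisymm (fun S hS => hS.1)
          intro S hS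
          refine ⟨hS, ?_⟩
          rintro rfl
          exact hE0 hS
        rw [h𝒜]
    rw [key, nog_core E hng hA0 hall B, hUeq]
  · rcases empty_or_sing hA0 with rfl | rfl
    · rw [P1 E B, Set.sUnion_empty]
    · rw [Set.sUnion_singleton]
      constructor
      · intro h
        exact (sing_empty E h).1
      · rintro rfl
        exact (eps_iff E).2 he

/-- The `¬γ, ¬ε` characterization: restricted relational image. -/
lemma nog_noeps_char (hng : ¬ gammaP E) (hne : ¬ epsP E) {Y : Type} (𝒜 : Set (Set Y))
    (B : Set Y) :
    DD E Y 𝒜 B ↔ ((B = ⋃₀ 𝒜 ∧ B ≠ ∅) ∨ (𝒜 = ∅ ∧ B = ∅)) := by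
  by_cases hA0 : (𝒜 \ {∅}).Nonempty
  · have hall : ∀ S ∈ 𝒜 \ {∅}, S.Nonempty := by
      rintro S ⟨hS, hSne⟩
      exact Set.nonempty_iff_ne_empty.2 hSne
    have hUeq : ⋃₀ 𝒜 = ⋃₀ (𝒜 \ {∅}) := by
      ext y
      constructor
      · rintro ⟨S, hS, hy⟩
        refine ⟨S, ⟨hS, ?_⟩, hy⟩
        rintro rfl
        exact hy
      · rintro ⟨S, hS, hy⟩
        exact ⟨S, hS.1, hy⟩
    have hUne : ⋃₀ 𝒜 ≠ ∅ := by
      obtain ⟨S, hS⟩ := hA0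
      obtain ⟨y, hy⟩ := hall S hS
      intro hcon
      have : y ∈ ⋃₀ 𝒜 := ⟨S, hS.1, hy⟩
      rw [hcon] at this
      exact this
    have h𝒜ne : 𝒜 ≠ ∅ := by
      obtain ⟨S, hS⟩ := hA0
      intro hcon
      rw [hcon] at hS
      exact hS.1
    have key : DD E Y 𝒜 B ↔ DD E Y (𝒜 \ {∅}) B := by
      by_cases hE0 : ∅ ∈ 𝒜
      · have h𝒜 : 𝒜 = insert ∅ (𝒜 \ {∅}) := by
          ext S
          constructor
          · intro hS
            by_cases hss : S = ∅
            · exact Or.inl hss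
            · exact Or.inr ⟨hS, hss⟩
          · rintro (rfl | hS)
            · exact hE0
            · exact hS.1
        conv_lhs => rw [h𝒜]
        exact nog_transparent E hng hA0 hall B
      · have h𝒜 : 𝒜 \ {∅} = 𝒜 := by
          apply Set.Subset.antisymm (fun S hS => hS.1)
          intro S hS
          refine ⟨hS, ?_⟩
          rintro rfl
          exact hE0 hS
        rw [h𝒜]
    rw [key, nog_core E hng hA0 hall B, ← hUeq]
    constructor
    · rintro rfl
      exact Or.inl ⟨rfl, hUne⟩
    · rintro (⟨rfl, -⟩ | ⟨hcon, -⟩)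
      · rfl
      · exact absurd hcon h𝒜ne
  · rcases empty_or_sing hA0 with rfl | rfl
    · rw [P1 E B]
      constructor
      · rintro rfl
        exact Or.inr ⟨rfl, rfl⟩
      · rintro (⟨rfl, hB⟩ | ⟨-, rfl⟩)
        · rw [Set.sUnion_empty]
        · rfl
    · constructor
      · intro h
        exact absurd ((sing_empty E h).2) hne
      · rintro (⟨rfl, hB⟩ | ⟨hcon, -⟩)
        · rw [Set.sUnion_singleton] at hB
          exact absurd rfl hB
        · exfalso
          have : ∅ ∈ ({∅} : Set (Set Y)) := rfl
          rw [hcon] at this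
          exact this


lemma sUnion_lam {X Y : Type} (r : Rel X Y) (A : Set X) :
    ⋃₀ (Lam r '' A) = r.image A := by
  ext y
  constructor
  · rintro ⟨S, ⟨x, hx, rfl⟩, hy⟩
    exact ⟨x, hx, hy⟩
  · rintro ⟨x, hx, hr⟩
    exact ⟨Lam r x, ⟨x, hx, rfl⟩, hr⟩

lemma barr_translate {X Y : Type} (r : Rel X Y) (A : Set X) (B : Set Y) :
    (B ⊆ ⋃₀ (Lam r '' A) ∧ ∀ S ∈ Lam r '' A, (S ∩ B).Nonempty) ↔ barrP r A B := by
  rw [sUnion_lam]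
  constructor
  · rintro ⟨h1, h2⟩
    refine ⟨h1, ?_⟩
    intro a ha
    obtain ⟨y, hyr, hyB⟩ := h2 (Lam r a) ⟨a, ha, rfl⟩
    exact ⟨y, hyB, hyr⟩
  · rintro ⟨h1, h2⟩
    refine ⟨h1, ?_⟩
    rintro S ⟨a, ha, rfl⟩
    obtain ⟨y, hyB, hr⟩ := h2 ha
    exact ⟨y, hr, hyB⟩

/-- The main classification. -/
theorem trichotomy :
    (∀ (X Y : Type) (r : Rel X Y), E.ext r = barrP r) ∨
    (∀ (X Y : Type) (r : Rel X Y), E.ext r = imgP r) ∨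
    (∀ (X Y : Type) (r : Rel X Y), E.ext r = rimgP r) := by
  by_cases hg : gammaP E
  · left
    intro X Y r
    refine funext fun (A : Set X) => funext fun (B : Set Y) => ?_
    apply propext
    rw [ext_eq E r A B, gamma_char E hg, barr_translate]
  · by_cases he : epsP E
    · right; left
      intro X Y r
      refine funext fun (A : Set X) => funext fun (B : Set Y) => ?_
      apply propext
      rw [ext_eq E r A B, nog_eps_char E hg he, sUnion_lam]
      exact Iff.rfl
    · right; right
      intro X Y r
      refine funext fun (A : Set X) => funext fun (B : Set Y) => ?_
      apply propext
      rw [ext_eq E r A B, nog_noeps_char E hg he, sUnion_lam, Set.image_eq_empty]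
      exact Iff.rfl

end Machinery

end Stmt19

/-- There are exactly three extensions of the powerset functor to `Rel`: the Barr
(Egli–Milner) extension, the relational image extension, and the restricted relational
image extension. -/
theorem stmt19 :
    (∃ E : RelExtension PowFunctor, ∀ (X Y : Type) (r : Rel X Y), E.ext r = barrP r) ∧
    (∃ E : RelExtension PowFunctor, ∀ (X Y : Type) (r : Rel X Y), E.ext r = imgP r) ∧
    (∃ E : RelExtension PowFunctor, ∀ (X Y : Type) (r : Rel X Y), E.ext r = rimgP r) ∧
    (∃ (X Y : Type) (r : Rel X Y), barrP r ≠ imgP r) ∧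
    (∃ (X Y : Type) (r : Rel X Y), barrP r ≠ rimgP r) ∧
    (∃ (X Y : Type) (r : Rel X Y), imgP r ≠ rimgP r) ∧
    (∀ E : RelExtension PowFunctor,
      (∀ (X Y : Type) (r : Rel X Y), E.ext r = barrP r) ∨
      (∀ (X Y : Type) (r : Rel X Y), E.ext r = imgP r) ∨
      (∀ (X Y : Type) (r : Rel X Y), E.ext r = rimgP r)) := by
  refine ⟨⟨Stmt19.barrExt, fun X Y r => rfl⟩,
          ⟨Stmt19.imgExt, fun X Y r => rfl⟩,
          ⟨Stmt19.rimgExt, fun X Y r => rfl⟩,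
          ⟨Bool, Bool, Stmt19.fullR, ?_⟩,
          ⟨Bool, Bool, Stmt19.fullR, ?_⟩,
          ⟨Bool, Bool, Stmt19.emptyR, ?_⟩,
          fun E => Stmt19.trichotomy E⟩
  · intro hcon
    have := congrFun (congrFun hcon ({true} : Set Bool)) ({true} : Set Bool)
    exact Stmt19.not_img_full (this ▸ Stmt19.barr_full)
  · intro hcon
    have := congrFun (congrFun hcon ({true} : Set Bool)) ({true} : Set Bool)
    exact Stmt19.not_rimg_full (this ▸ Stmt19.barr_full)
  · intro hcon
    have := congrFun (congrFun hcon (Set.univ : Set Bool)) (∅ : Set Bool)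
    exact Stmt19.not_rimg_empty (this ▸ Stmt19.img_empty)
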